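/- arXiv:2407.13842 — 2 statements merged into one kernel-verified Lean document; each statement's English description precedes it below -/
import Mathlib

section
/- Let μ be a probability measure on a measurable space Ω and let G, S, T, T' be measurable events with μ(G) > 0, μ(G ∩ T ∩ S) > 0, μ(G ∩ T') > 0, μ(T ∩ S) > 0, μ(T' ∩ S) > 0, μ(S) > 0, μ(G ∩ S) > 0 and μ(S ∩ T ∩ T'ᶜ) > 0. Assume the two conditional-independence hypotheses (i) μ(T'ᶜ | G ∩ T ∩ S) = μ(T'ᶜ | G) and (ii) μ(S | G ∩ T') = μ(S | G). Then μ(G | S ∩ T ∩ T'ᶜ) = (μ(T ∩ S) / μ(S ∩ T ∩ T'ᶜ)) · μ(G | T ∩ S) · (1 − μ(G | T' ∩ S) · μ(T' ∩ S) / (μ(G | S) · μ(S))). -/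
open MeasureTheory ProbabilityTheory
open scoped ProbabilityTheory

theorem stmt_3 {Ω : Type*} [MeasurableSpace Ω] (μ : Measure Ω) [IsProbabilityMeasure μ]
    (G S T T' : Set Ω)
    (hGm : MeasurableSet G) (hSm : MeasurableSet S)
    (hTm : MeasurableSet T) (hT'm : MeasurableSet T')
    (hG : 0 < μ G) (hGTS : 0 < μ (G ∩ T ∩ S)) (hGT' : 0 < μ (G ∩ T'))
    (hTS : 0 < μ (T ∩ S)) (hT'S : 0 < μ (T' ∩ S)) (hS : 0 < μ S)
    (hGS : 0 < μ (G ∩ S)) (hSTT' : 0 < μ (S ∩ T ∩ T'ᶜ))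
    (hindep₁ : μ[T'ᶜ | G ∩ T ∩ S] = μ[T'ᶜ | G])
    (hindep₂ : μ[S | G ∩ T'] = μ[S | G]) :
    μ[G | S ∩ T ∩ T'ᶜ] = (μ (T ∩ S) / μ (S ∩ T ∩ T'ᶜ)) * μ[G | T ∩ S]
      * (1 - μ[G | T' ∩ S] * μ (T' ∩ S) / (μ[G | S] * μ S)) := by
  have fin : ∀ A : Set Ω, μ A ≠ ⊤ := fun A => measure_ne_top μ A
  rw [cond_apply ((hGm.inter hTm).inter hSm) μ T'ᶜ, cond_apply hGm μ T'ᶜ,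
    ← ENNReal.div_eq_inv_mul, ← ENNReal.div_eq_inv_mul] at hindep₁
  rw [cond_apply (hGm.inter hT'm) μ S, cond_apply hGm μ S,
    ← ENNReal.div_eq_inv_mul, ← ENNReal.div_eq_inv_mul] at hindep₂
  have h1 : μ G * μ (G ∩ T ∩ S ∩ T'ᶜ) = μ (G ∩ T ∩ S) * μ (G ∩ T'ᶜ) :=
    (ENNReal.div_eq_div_iff hG.ne' (fin _) hGTS.ne' (fin _)).mp hindep₁
  have h2 : μ G * μ (G ∩ T' ∩ S) = μ (G ∩ T') * μ (G ∩ S) :=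
    (ENNReal.div_eq_div_iff hG.ne' (fin _) hGT'.ne' (fin _)).mp hindep₂
  -- complement identities
  have hc1 : μ (G ∩ T'ᶜ) = μ G - μ (G ∩ T') := by
    rw [show G ∩ T'ᶜ = G \ (G ∩ T') by ext x; simp]
    exact measure_diff Set.inter_subset_left (hGm.inter hT'm).nullMeasurableSet (fin _)
  have hc2 : μ (S ∩ G) - μ (T' ∩ S ∩ G) = μ (G ∩ S ∩ T'ᶜ) := by
    rw [show G ∩ S ∩ T'ᶜ = (S ∩ G) \ (T' ∩ S ∩ G) by ext x; simp; tauto]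
    exact (measure_diff (show T' ∩ S ∩ G ⊆ S ∩ G from fun x hx => ⟨hx.1.2, hx.2⟩)
      ((hT'm.inter hSm).inter hGm).nullMeasurableSet (fin _)).symm
  -- key identity
  have hle : μ (T' ∩ S ∩ G) ≤ μ (S ∩ G) := measure_mono (fun x hx => ⟨hx.1.2, hx.2⟩)
  have key : μ (S ∩ T ∩ T'ᶜ ∩ G) * μ (S ∩ G) =
      μ (T ∩ S ∩ G) * (μ (S ∩ G) - μ (T' ∩ S ∩ G)) := by
    have hre1 : μ (S ∩ T ∩ T'ᶜ ∩ G) = μ (G ∩ T ∩ S ∩ T'ᶜ) := by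
      congr 1; ext x; simp; tauto
    have hre2 : μ (T ∩ S ∩ G) = μ (G ∩ T ∩ S) := by
      congr 1; ext x; simp; tauto
    have hre3 : μ (T' ∩ S ∩ G) = μ (G ∩ T' ∩ S) := by
      congr 1; ext x; simp; tauto
    have hre4 : μ (S ∩ G) = μ (G ∩ S) := by rw [Set.inter_comm]
    rw [← ENNReal.mul_right_inj hG.ne' (fin G), hre1, hre2]
    have hc2' : μ (G ∩ S ∩ T'ᶜ) = μ (G ∩ S) - μ (G ∩ T' ∩ S) := by
      rw [← hc2, hre3, hre4]
    calc μ G * (μ (G ∩ T ∩ S ∩ T'ᶜ) * μ (S ∩ G))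
        = (μ G * μ (G ∩ T ∩ S ∩ T'ᶜ)) * μ (S ∩ G) := by ring
      _ = (μ (G ∩ T ∩ S) * μ (G ∩ T'ᶜ)) * μ (S ∩ G) := by rw [h1]
      _ = μ (G ∩ T ∩ S) * ((μ G - μ (G ∩ T')) * μ (G ∩ S)) := by
          rw [hc1, hre4]; ring
      _ = μ (G ∩ T ∩ S) * (μ G * μ (G ∩ S) - μ (G ∩ T') * μ (G ∩ S)) := by
          rw [ENNReal.sub_mul (fun _ _ => fin _)]
      _ = μ (G ∩ T ∩ S) * (μ G * μ (G ∩ S) - μ G * μ (G ∩ T' ∩ S)) := by rw [h2]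
      _ = μ (G ∩ T ∩ S) * (μ G * (μ (G ∩ S) - μ (G ∩ T' ∩ S))) := by
          rw [← ENNReal.mul_sub (fun _ _ => fin _)]
      _ = μ G * (μ (G ∩ T ∩ S) * (μ (G ∩ S) - μ (G ∩ T' ∩ S))) := by ring
      _ = μ G * (μ (G ∩ T ∩ S) * μ (G ∩ S ∩ T'ᶜ)) := by rw [hc2']
      _ = μ G * (μ (G ∩ T ∩ S) * (μ (S ∩ G) - μ (T' ∩ S ∩ G))) := by
          rw [hc2]
  -- now the goal
  rw [cond_apply ((hSm.inter hTm).inter hT'm.compl) μ G,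
    cond_apply (hTm.inter hSm) μ G, cond_apply (hT'm.inter hSm) μ G, cond_apply hSm μ G]
  have e1 : (μ (T' ∩ S))⁻¹ * μ (T' ∩ S ∩ G) * μ (T' ∩ S) = μ (T' ∩ S ∩ G) := by
    rw [mul_comm ((μ (T' ∩ S))⁻¹) _, mul_assoc, ENNReal.inv_mul_cancel hT'S.ne' (fin _),
      mul_one]
  have e2 : (μ S)⁻¹ * μ (S ∩ G) * μ S = μ (S ∩ G) := by
    rw [mul_comm ((μ S)⁻¹) _, mul_assoc, ENNReal.inv_mul_cancel hS.ne' (fin _), mul_one]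
  rw [e1, e2]
  have e3 : μ (T ∩ S) / μ (S ∩ T ∩ T'ᶜ) * ((μ (T ∩ S))⁻¹ * μ (T ∩ S ∩ G))
      = (μ (S ∩ T ∩ T'ᶜ))⁻¹ * μ (T ∩ S ∩ G) := by
    rw [div_eq_mul_inv]
    rw [show μ (T ∩ S) * (μ (S ∩ T ∩ T'ᶜ))⁻¹ * ((μ (T ∩ S))⁻¹ * μ (T ∩ S ∩ G))
      = (μ (T ∩ S) * (μ (T ∩ S))⁻¹) * ((μ (S ∩ T ∩ T'ᶜ))⁻¹ * μ (T ∩ S ∩ G)) by ring,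
      ENNReal.mul_inv_cancel hTS.ne' (fin _), one_mul]
  rw [e3]
  have hSG0 : μ (S ∩ G) ≠ 0 := by rw [Set.inter_comm]; exact hGS.ne'
  have e4 : (1 : ENNReal) - μ (T' ∩ S ∩ G) / μ (S ∩ G)
      = (μ (S ∩ G) - μ (T' ∩ S ∩ G)) / μ (S ∩ G) := by
    rw [ENNReal.sub_div (fun _ _ => hSG0), ENNReal.div_self hSG0 (fin _)]
  rw [e4]
  have final : μ (T ∩ S ∩ G) * ((μ (S ∩ G) - μ (T' ∩ S ∩ G)) / μ (S ∩ G))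
      = μ (S ∩ T ∩ T'ᶜ ∩ G) := by
    rw [← mul_div_assoc, ← key, mul_div_assoc, ENNReal.div_self hSG0 (fin _), mul_one]
  rw [mul_assoc, final]
end

section
/- Let β : ℕ → ℝ satisfy 0 < β n < 1 for all n, with ∑ β n divergent (β not summable), let g₀ : ℝ, and define the forward-process laws μ : ℕ → Measure ℝ by μ 0 = Measure.dirac g₀ and μ (n+1) = (Measure.map (fun x => Real.sqrt (1 − β n) * x) (μ n)) ∗ gaussianReal 0 (β n). Then the sequence of probability measures μ n converges in distribution (weak convergence of probability measures on ℝ) to the standard Gaussian gaussianReal 0 1. -/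
open MeasureTheory ProbabilityTheory
open scoped MeasureTheory NNReal

section AuxStmt8
open Real
open scoped ENNReal

lemma gauss_int (a b w : ℝ) (ha : 0 < a) (hb : 0 < b) :
    ∫ u : ℝ, rexp (-(a * u ^ 2 + b * (w - u) ^ 2))
      = Real.sqrt (π / (a + b)) * rexp (-(a * b / (a + b) * w ^ 2)) := by
  have hab : 0 < a + b := by linarith
  have key : ∀ u : ℝ, a * u ^ 2 + b * (w - u) ^ 2
      = (a + b) * (u - b * w / (a + b)) ^ 2 + a * b / (a + b) * w ^ 2 := by
    intro u
    field_simp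
    ring
  simp_rw [key, neg_add, Real.exp_add, integral_mul_const]
  congr 1
  have := integral_sub_right_eq_self (μ := volume)
    (fun u : ℝ => rexp (-(a + b) * u ^ 2)) (b * w / (a + b))
  simp_rw [← neg_mul]
  rw [this, integral_gaussian]

lemma pdf_conv (m₁ m₂ : ℝ) (v₁ v₂ : ℝ≥0) (h₁ : v₁ ≠ 0) (h₂ : v₂ ≠ 0) (z : ℝ) :
    ∫ x : ℝ, gaussianPDFReal m₁ v₁ x * gaussianPDFReal m₂ v₂ (z - x)
      = gaussianPDFReal (m₁ + m₂) (v₁ + v₂) z := by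
  have hv₁ : (0 : ℝ) < v₁ := lt_of_le_of_ne v₁.2 (by exact_mod_cast (Ne.symm h₁))
  have hv₂ : (0 : ℝ) < v₂ := lt_of_le_of_ne v₂.2 (by exact_mod_cast (Ne.symm h₂))
  have hπ : (0 : ℝ) < π := Real.pi_pos
  set a : ℝ := (2 * (v₁ : ℝ))⁻¹ with ha_def
  set b : ℝ := (2 * (v₂ : ℝ))⁻¹ with hb_def
  have ha : 0 < a := by positivity
  have hb : 0 < b := by positivity
  set w : ℝ := z - m₁ - m₂ with hw_def
  have hpt : ∀ x : ℝ, gaussianPDFReal m₁ v₁ x * gaussianPDFReal m₂ v₂ (z - x)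
      = ((Real.sqrt (2 * π * v₁))⁻¹ * (Real.sqrt (2 * π * v₂))⁻¹)
        * rexp (-(a * (x - m₁) ^ 2 + b * (w - (x - m₁)) ^ 2)) := by
    intro x
    simp only [gaussianPDFReal]
    rw [mul_mul_mul_comm, ← Real.exp_add]
    congr 1
    rw [ha_def, hb_def, hw_def]
    field_simp
    ring
  simp_rw [hpt, integral_const_mul]
  rw [integral_sub_right_eq_self (fun u : ℝ => rexp (-(a * u ^ 2 + b * (w - u) ^ 2))) m₁,
    gauss_int a b w ha hb]
  have hab : 0 < a + b := by linarith
  have hconst : (Real.sqrt (2 * π * v₁))⁻¹ * (Real.sqrt (2 * π * v₂))⁻¹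
      * Real.sqrt (π / (a + b)) = (Real.sqrt (2 * π * ((v₁ : ℝ) + v₂)))⁻¹ := by
    have hc : π / (a + b) = (2 * π * v₁) * (2 * π * v₂) / (2 * π * ((v₁ : ℝ) + v₂)) := by
      rw [ha_def, hb_def]
      field_simp
      ring
    have h3 : Real.sqrt (2 * π * ((v₁ : ℝ) + v₂)) ≠ 0 := by positivity
    have h1 : Real.sqrt (2 * π * (v₁ : ℝ)) ≠ 0 := by positivity
    have h2 : Real.sqrt (2 * π * (v₂ : ℝ)) ≠ 0 := by positivity
    rw [hc, Real.sqrt_div (by positivity), Real.sqrt_mul (by positivity)]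
    field_simp
    rw [← Real.sqrt_mul (by positivity), ← Real.sqrt_mul (by positivity)]
    congr 1
    ring
  rw [← mul_assoc, hconst]
  simp only [gaussianPDFReal, NNReal.coe_add]
  congr 1
  rw [hw_def, ha_def, hb_def]
  field_simp
  ring

lemma conv_withDensity {f g : ℝ → ℝ≥0∞} (hf : Measurable f) (hg : Measurable g) :
    Measure.conv (volume.withDensity f) (volume.withDensity g)
      = volume.withDensity (fun z => ∫⁻ x, f x * g (z - x)) := by
  ext s hs
  have hadd : Measurable (fun p : ℝ × ℝ => p.1 + p.2) := measurable_add
  rw [Measure.conv, Measure.map_apply hadd hs, Measure.prod_apply (hadd hs)]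
  have inner : ∀ x : ℝ, (volume.withDensity g)
      (Prod.mk x ⁻¹' ((fun p : ℝ × ℝ => p.1 + p.2) ⁻¹' s))
      = ∫⁻ z, s.indicator 1 z * g (z - x) := by
    intro x
    have hms : MeasurableSet (Prod.mk x ⁻¹' ((fun p : ℝ × ℝ => p.1 + p.2) ⁻¹' s)) :=
      measurable_prodMk_left (hadd hs)
    rw [withDensity_apply g hms, ← lintegral_indicator hms,
      ← lintegral_add_right_eq_self (fun z => s.indicator 1 z * g (z - x)) x]
    congr 1 with y
    by_cases hy : x + y ∈ s
    · have hy' : y + x ∈ s := by rwa [add_comm]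
      simp [Set.indicator, hy, hy']
    · have hy' : ¬ (y + x ∈ s) := by rwa [add_comm]
      simp [Set.indicator, hy, hy']
  rw [lintegral_withDensity_eq_lintegral_mul volume hf
    (measurable_measure_prodMk_left (hadd hs))]
  simp only [Pi.mul_apply, inner]
  have hmeas_z : ∀ x : ℝ, Measurable (fun z : ℝ => s.indicator 1 z * g (z - x)) :=
    fun x => ((measurable_one.indicator hs).mul (hg.comp (measurable_id.sub measurable_const)))
  have step1 : ∀ x : ℝ, f x * ∫⁻ z, s.indicator 1 z * g (z - x)
      = ∫⁻ z, f x * (s.indicator 1 z * g (z - x)) := by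
    intro x
    rw [lintegral_const_mul _ (hmeas_z x)]
  simp_rw [step1]
  rw [lintegral_lintegral_swap]
  swap
  · exact ((hf.comp measurable_fst).mul
      (((measurable_one.indicator hs).comp measurable_snd).mul
        (hg.comp (measurable_snd.sub measurable_fst)))).aemeasurable
  rw [withDensity_apply _ hs, ← lintegral_indicator hs]
  congr 1 with z
  simp_rw [mul_left_comm (f _)]
  rw [lintegral_const_mul _ (by fun_prop : Measurable fun x : ℝ => f x * g (z - x))]
  by_cases hz : z ∈ s
  · simp [Set.indicator, hz]
  · simp [Set.indicator, hz]

lemma gaussianReal_conv (m₁ m₂ : ℝ) (v₁ v₂ : ℝ≥0) :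
    Measure.conv (gaussianReal m₁ v₁) (gaussianReal m₂ v₂)
      = gaussianReal (m₁ + m₂) (v₁ + v₂) := by
  by_cases h₁ : v₁ = 0
  · subst h₁
    rw [gaussianReal_zero_var, Measure.conv, Measure.dirac_prod,
      Measure.map_map measurable_add measurable_prodMk_left]
    have : ((fun p : ℝ × ℝ => p.1 + p.2) ∘ Prod.mk m₁) = fun y => m₁ + y := rfl
    rw [this, gaussianReal_map_const_add, add_comm m₂ m₁, zero_add]
  by_cases h₂ : v₂ = 0
  · subst h₂
    rw [gaussianReal_zero_var, Measure.conv, Measure.prod_dirac,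
      Measure.map_map measurable_add (measurable_id'.prodMk measurable_const)]
    have : ((fun p : ℝ × ℝ => p.1 + p.2) ∘ (fun x => (x, m₂))) = fun x => x + m₂ := rfl
    rw [this, gaussianReal_map_add_const, add_zero]
  · have h₁₂ : v₁ + v₂ ≠ 0 := fun h => h₁ (by simpa using (add_eq_zero.mp h).1)
    rw [gaussianReal_of_var_ne_zero m₁ h₁, gaussianReal_of_var_ne_zero m₂ h₂,
      gaussianReal_of_var_ne_zero _ h₁₂,
      conv_withDensity (measurable_gaussianPDF _ _) (measurable_gaussianPDF _ _)]
    refine congrArg _ (funext fun z => ?_)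
    have hbdd : ∀ y : ℝ, ‖gaussianPDFReal m₂ v₂ y‖ ≤ (Real.sqrt (2 * π * v₂))⁻¹ := by
      intro y
      rw [Real.norm_eq_abs, abs_of_nonneg (gaussianPDFReal_nonneg _ _ _), gaussianPDFReal]
      have he : rexp (-(y - m₂) ^ 2 / (2 * v₂)) ≤ 1 :=
        Real.exp_le_one_iff.mpr
          (div_nonpos_of_nonpos_of_nonneg (neg_nonpos.mpr (sq_nonneg _)) (by positivity))
      exact mul_le_of_le_one_right (by positivity) he
    have hmeas2 : Measurable (fun x : ℝ => gaussianPDFReal m₂ v₂ (z - x)) :=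
      (measurable_gaussianPDFReal m₂ v₂).comp (measurable_const.sub measurable_id)
    have hint : Integrable (fun x : ℝ => gaussianPDFReal m₁ v₁ x * gaussianPDFReal m₂ v₂ (z - x)) := by
      have h := (integrable_gaussianPDFReal m₁ v₁).bdd_mul
        hmeas2.aestronglyMeasurable (ae_of_all _ fun x => hbdd (z - x))
      exact h.congr (ae_of_all _ fun x => mul_comm _ _)
    simp only [gaussianPDF]
    simp_rw [← ENNReal.ofReal_mul (gaussianPDFReal_nonneg m₁ v₁ _)]
    rw [← ofReal_integral_eq_lintegral_ofReal hint
      (ae_of_all _ fun x => mul_nonneg (gaussianPDFReal_nonneg _ _ _) (gaussianPDFReal_nonneg _ _ _)),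
      pdf_conv m₁ m₂ v₁ v₂ h₁ h₂ z]

lemma gaussianReal_eq_map (m : ℝ) (v : ℝ≥0) :
    gaussianReal m v
      = Measure.map (fun x => m + Real.sqrt v * x) (gaussianReal 0 1) := by
  have h1 : Measure.map (fun x : ℝ => Real.sqrt v * x) (gaussianReal 0 1)
      = gaussianReal 0 v := by
    rw [gaussianReal_map_const_mul]
    rw [mul_zero]
    congr 1
    rw [mul_one]
    exact Subtype.ext (Real.sq_sqrt v.2)
  have h2 : ((fun x : ℝ => m + x) ∘ (fun x : ℝ => Real.sqrt v * x))
      = fun x => m + Real.sqrt v * x := rfl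
  rw [← h2, ← Measure.map_map (measurable_const_add m) (measurable_const_mul _), h1,
    gaussianReal_map_const_add, zero_add]

noncomputable def pg (m : ℝ) (v : ℝ≥0) : ProbabilityMeasure ℝ :=
  ⟨gaussianReal m v, inferInstance⟩

lemma tendsto_gauss (m : ℕ → ℝ) (v : ℕ → ℝ≥0)
    (hm : Filter.Tendsto m Filter.atTop (nhds 0))
    (hv : Filter.Tendsto (fun n => (v n : ℝ)) Filter.atTop (nhds 1)) :
    Filter.Tendsto (fun n => pg (m n) (v n)) Filter.atTop (nhds (pg 0 1)) := by
  refine ProbabilityMeasure.tendsto_iff_forall_integral_tendsto.mpr fun f => ?_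
  have hrepr : ∀ (a : ℝ) (w : ℝ≥0), ∫ ω, f ω ∂(gaussianReal a w)
      = ∫ x, f (a + Real.sqrt w * x) ∂(gaussianReal 0 1) := by
    intro a w
    rw [gaussianReal_eq_map a w,
      integral_map (by fun_prop) f.continuous.aestronglyMeasurable]
  show Filter.Tendsto (fun n => ∫ ω, f ω ∂(gaussianReal (m n) (v n))) Filter.atTop
    (nhds (∫ ω, f ω ∂(gaussianReal 0 1)))
  simp_rw [hrepr]
  have h01 : ∀ x : ℝ, (0 : ℝ) + Real.sqrt ((1 : ℝ≥0) : ℝ) * x = x := by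
    intro x
    simp [Real.sqrt_one]
  refine tendsto_integral_of_dominated_convergence (fun _ => ‖f‖)
    (fun n => (f.continuous.comp
      (by fun_prop : Continuous fun x : ℝ => m n + Real.sqrt (v n) * x)).aestronglyMeasurable)
    (integrable_const _)
    (fun n => ae_of_all _ fun x => f.norm_coe_le_norm _)
    (ae_of_all _ fun x => ?_)
  have h1 : Filter.Tendsto (fun n => m n + Real.sqrt (v n) * x) Filter.atTop
      (nhds (0 + 1 * x)) := by
    refine hm.add (Filter.Tendsto.mul_const x ?_)
    have := (Real.continuous_sqrt.tendsto 1).comp hv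
    simpa [Real.sqrt_one, Function.comp_def] using this
  have h2 := (f.continuous.tendsto _).comp h1
  rw [h01 x]
  simpa [Function.comp_def] using h2

end AuxStmt8

theorem stmt_8 (β : ℕ → ℝ) (hβ : ∀ n, 0 < β n ∧ β n < 1) (hns : ¬ Summable β) (g₀ : ℝ)
    (μ : ℕ → ProbabilityMeasure ℝ)
    (hμ0 : (μ 0 : Measure ℝ) = Measure.dirac g₀)
    (hμ : ∀ n, (μ (n + 1) : Measure ℝ)
      = Measure.conv (Measure.map (fun x => Real.sqrt (1 - β n) * x) (μ n : Measure ℝ))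
          (gaussianReal 0 (β n).toNNReal)) :
    Filter.Tendsto μ Filter.atTop (nhds ⟨gaussianReal 0 1, inferInstance⟩) := by
  set A : ℕ → ℝ := fun n => ∏ k ∈ Finset.range n, Real.sqrt (1 - β k) with hA_def
  have h01 : ∀ k, 0 ≤ 1 - β k ∧ 1 - β k ≤ 1 := fun k => ⟨by linarith [(hβ k).2], by linarith [(hβ k).1]⟩
  have hA_sq : ∀ n, A n ^ 2 = ∏ k ∈ Finset.range n, (1 - β k) := by
    intro n
    rw [hA_def, ← Finset.prod_pow]
    exact Finset.prod_congr rfl fun k _ => Real.sq_sqrt (h01 k).1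
  have hA_sq_le_one : ∀ n, A n ^ 2 ≤ 1 := by
    intro n
    rw [hA_sq]
    exact Finset.prod_le_one (fun k _ => (h01 k).1) (fun k _ => (h01 k).2)
  have hA_nonneg : ∀ n, 0 ≤ A n :=
    fun n => Finset.prod_nonneg fun k _ => Real.sqrt_nonneg _
  set V : ℕ → ℝ≥0 := fun n => (1 - A n ^ 2).toNNReal with hV_def
  have hV_coe : ∀ n, ((V n : ℝ≥0) : ℝ) = 1 - A n ^ 2 :=
    fun n => Real.coe_toNNReal _ (by linarith [hA_sq_le_one n])
  -- closed form
  have hform : ∀ n, (μ n : Measure ℝ) = gaussianReal (A n * g₀) (V n) := by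
    intro n
    induction n with
    | zero =>
      have hA0 : A 0 = 1 := by simp [hA_def]
      have hV0 : V 0 = 0 := by
        apply NNReal.coe_injective
        rw [hV_coe 0, hA0]
        simp
      rw [hμ0, hA0, hV0, one_mul, gaussianReal_zero_var]
    | succ n ih =>
      rw [hμ n, ih, gaussianReal_map_const_mul, gaussianReal_conv]
      have hmean : Real.sqrt (1 - β n) * (A n * g₀) + 0 = A (n + 1) * g₀ := by
        rw [add_zero, hA_def]
        simp only [Finset.prod_range_succ]
        ring
      have hAsucc : A (n + 1) ^ 2 = A n ^ 2 * (1 - β n) := by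
        rw [hA_def]
        simp only [Finset.prod_range_succ, mul_pow]
        rw [Real.sq_sqrt (h01 n).1]
      rw [hmean]
      congr 1
      apply NNReal.coe_injective
      push_cast [NNReal.coe_mk]
      rw [hV_coe n, hV_coe (n + 1), Real.coe_toNNReal _ (hβ n).1.le,
        Real.sq_sqrt (h01 n).1, hAsucc]
      ring
  -- A n tends to 0
  have hS : Filter.Tendsto (fun n => ∑ k ∈ Finset.range n, β k) Filter.atTop Filter.atTop :=
    (not_summable_iff_tendsto_nat_atTop_of_nonneg (fun k => (hβ k).1.le)).mp hns
  have hA_sq_le : ∀ n, A n ^ 2 ≤ Real.exp (-(∑ k ∈ Finset.range n, β k)) := by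
    intro n
    rw [hA_sq, ← Finset.sum_neg_distrib, Real.exp_sum]
    refine Finset.prod_le_prod (fun k _ => (h01 k).1) (fun k _ => ?_)
    have := Real.add_one_le_exp (-β k)
    linarith
  have hA2_to : Filter.Tendsto (fun n => A n ^ 2) Filter.atTop (nhds 0) := by
    refine squeeze_zero (fun n => sq_nonneg _) hA_sq_le ?_
    exact Real.tendsto_exp_neg_atTop_nhds_zero.comp hS
  have hA_to : Filter.Tendsto A Filter.atTop (nhds 0) := by
    have := hA2_to.sqrt
    rw [Real.sqrt_zero] at this
    refine this.congr fun n => ?_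
    rw [Real.sqrt_sq (hA_nonneg n)]
  -- conclude
  have hm : Filter.Tendsto (fun n => A n * g₀) Filter.atTop (nhds 0) := by
    have := hA_to.mul_const g₀
    rwa [zero_mul] at this
  have hv : Filter.Tendsto (fun n => ((V n : ℝ≥0) : ℝ)) Filter.atTop (nhds 1) := by
    simp_rw [hV_coe]
    have := (tendsto_const_nhds (x := (1:ℝ)) (f := Filter.atTop)).sub hA2_to
    rwa [sub_zero] at this
  have hfinal := tendsto_gauss (fun n => A n * g₀) V hm hv
  have hpg : ∀ n, pg (A n * g₀) (V n) = μ n :=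
    fun n => Subtype.ext (hform n).symm
  have hpg1 : pg 0 1 = (⟨gaussianReal 0 1, inferInstance⟩ : ProbabilityMeasure ℝ) := rfl
  rw [hpg1] at hfinal
  exact hfinal.congr hpg
end
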